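/- Let n ≥ 3 be an integer, H a real constant, and let (x, y, θ) be a Delaunay generating curve on an interval I with constant force F. If H·F < 0, then H·θ'(t) < 0 for every t ∈ I; in particular the planar curvature −θ' never vanishes, so the generating curve is locally convex (this is the nodoid case of the Delaunay classification). -/

import Mathlib

open Real Set

/-- For a Delaunay generating curve `(x, y, θ)` on an interval `I`
with constant force `F`, if `H F < 0` then `H θ'(t) < 0` for every `t ∈ I`;
in particular the planar curvature `-θ'` never vanishes, so the generating
curve is locally convex (the nodoid case). -/
theorem nodoid_locally_convex
    (n : ℕ) (hn : 3 ≤ n) (H F : ℝ) (I : Set ℝ) (hI : I.OrdConnected)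
    (x y θ : ℝ → ℝ)
    (hypos : ∀ t ∈ I, 0 < y t)
    (hx : ∀ t ∈ I, HasDerivWithinAt x (Real.cos (θ t)) I t)
    (hy : ∀ t ∈ I, HasDerivWithinAt y (Real.sin (θ t)) I t)
    (hθ : ∀ t ∈ I, HasDerivWithinAt θ
      (-((n : ℝ) - 1) * H + ((n : ℝ) - 2) * Real.cos (θ t) / y t) I t)
    (hF : ∀ t ∈ I, y t ^ (n - 2) * (Real.cos (θ t) - H * y t) = F)
    (hHF : H * F < 0) :
    ∀ t ∈ I,
      H * (-((n : ℝ) - 1) * H + ((n : ℝ) - 2) * Real.cos (θ t) / y t) < 0 ∧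
      -(-((n : ℝ) - 1) * H + ((n : ℝ) - 2) * Real.cos (θ t) / y t) ≠ 0 := by
  intro t ht
  have hyt := hypos t ht
  have hFt := hF t ht
  have hH : H ≠ 0 := by
    rintro rfl
    simp at hHF
  obtain ⟨A, hApos, hFt⟩ : ∃ A, 0 < A ∧ A * (Real.cos (θ t) - H * y t) = F :=
    ⟨_, pow_pos hyt _, hFt⟩
  have hn2 : (1 : ℝ) ≤ (n : ℝ) - 2 := by
    have : (3 : ℝ) ≤ (n : ℝ) := by exact_mod_cast hn
    linarith
  have key : H * (-((n : ℝ) - 1) * H + ((n : ℝ) - 2) * Real.cos (θ t) / y t)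
      * (y t * A) = -H ^ 2 * (y t * A) + ((n : ℝ) - 2) * (H * F) := by
    rw [← hFt]
    field_simp
    ring
  have hlt : H * (-((n : ℝ) - 1) * H + ((n : ℝ) - 2) * Real.cos (θ t) / y t)
      * (y t * A) < 0 := by
    rw [key]
    have hH2 : 0 < H ^ 2 := by positivity
    nlinarith [mul_pos hyt hApos]
  have hmain : H * (-((n : ℝ) - 1) * H + ((n : ℝ) - 2) * Real.cos (θ t) / y t) < 0 := by
    by_contra h
    push_neg at h
    nlinarith [mul_pos hyt hApos]
  refine ⟨hmain, ?_⟩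
  intro h0
  have : (-((n : ℝ) - 1) * H + ((n : ℝ) - 2) * Real.cos (θ t) / y t) = 0 := by
    linarith [neg_eq_zero.mp h0]
  rw [this, mul_zero] at hmain
  exact lt_irrefl 0 hmain
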